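/- arXiv:1205.5941 — 5 statements merged into one kernel-verified Lean document; each statement's English description precedes it below -/
import Mathlib

section
/- Let V be an at most countable type and let G be a simple graph on V whose vertex degrees are uniformly bounded (there exists c > 0 with deg(v) ≤ c for every vertex v; in particular G is locally finite). Then G admits a balanced orientation — that is, a relation r : V → V → Prop such that r u v implies that u and v are adjacent in G, for every adjacent pair {u,v} exactly one of r u v and r v u holds, and for every vertex v the (finite) number of vertices u with r v u equals the number of vertices u with r u v — if and only if every vertex of G has even degree. -/
set_option linter.unusedSectionVars false
set_option linter.unusedVariables false

namespace BalAux


variable {V : Type*}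

/-- A balanced partial orientation inside graph `H`. -/
def Bal (H : SimpleGraph V) (D : Set (V × V)) : Prop :=
  (∀ p ∈ D, H.Adj p.1 p.2) ∧ (∀ u v : V, (u, v) ∈ D → (v, u) ∉ D) ∧
  (∀ v : V, {u | (v, u) ∈ D}.ncard = {u | (u, v) ∈ D}.ncard)

/-- Existence of a "combinatorial cycle" in `H`. -/
def HasCyc (H : SimpleGraph V) : Prop :=
  ∃ N : ℕ, 3 ≤ N ∧ ∃ g : ZMod N → V, Function.Injective g ∧ ∀ i, H.Adj (g i) (g (i + 1))

lemma bal_cycle {H : SimpleGraph V} (h : HasCyc H) :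
    ∃ D : Set (V × V), D.Nonempty ∧ Bal H D := by
  obtain ⟨N, hN, g, hinj, hadj⟩ := h
  haveI : NeZero N := ⟨by omega⟩
  refine ⟨{p | ∃ i, p = (g i, g (i + 1))}, ⟨(g 0, g 1), ⟨0, by simp⟩⟩, ?_, ?_, ?_⟩
  · rintro p ⟨i, rfl⟩; exact hadj i
  · rintro u v ⟨i, hi⟩ ⟨j, hj⟩
    simp only [Prod.mk.injEq] at hi hj
    obtain ⟨hi1, hi2⟩ := hi; obtain ⟨hj1, hj2⟩ := hj
    have h1 : j = i + 1 := hinj (by rw [← hj1, ← hi2])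
    have h2 : i = j + 1 := hinj (by rw [← hi1, ← hj2])
    rw [h1] at h2
    have : (2 : ZMod N) = 0 := by linear_combination -h2
    have := Nat.le_of_dvd (by norm_num) ((ZMod.natCast_eq_zero_iff 2 N).mp (by exact_mod_cast this))
    omega
  · intro v
    by_cases hv : ∃ i, g i = v
    · obtain ⟨i, rfl⟩ := hv
      have hout : {u | (g i, u) ∈ {p : V × V | ∃ i, p = (g i, g (i + 1))}} = {g (i + 1)} := by
        ext u; simp only [Set.mem_setOf_eq, Set.mem_singleton_iff, Prod.mk.injEq]
        constructor
        · rintro ⟨j, hj1, hj2⟩; rw [← hinj hj1] at hj2; exact hj2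
        · rintro rfl; exact ⟨i, rfl, rfl⟩
      have hin : {u | (u, g i) ∈ {p : V × V | ∃ i, p = (g i, g (i + 1))}} = {g (i - 1)} := by
        ext u; simp only [Set.mem_setOf_eq, Set.mem_singleton_iff, Prod.mk.injEq]
        constructor
        · rintro ⟨j, hj1, hj2⟩
          have hji : j = i - 1 := by
            have h5 := hinj hj2.symm; rw [← h5]; ring
          rw [hji] at hj1; exact hj1
        · rintro rfl; exact ⟨i - 1, rfl, by rw [sub_add_cancel]⟩
      rw [hout, hin, Set.ncard_singleton, Set.ncard_singleton]
    · push_neg at hv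
      have hout : {u | (v, u) ∈ {p : V × V | ∃ i, p = (g i, g (i + 1))}} = ∅ := by
        ext u; simp only [Set.mem_setOf_eq, Set.mem_empty_iff_false, iff_false, Prod.mk.injEq]
        rintro ⟨j, hj1, _⟩; exact hv j hj1.symm
      have hin : {u | (u, v) ∈ {p : V × V | ∃ i, p = (g i, g (i + 1))}} = ∅ := by
        ext u; simp only [Set.mem_setOf_eq, Set.mem_empty_iff_false, iff_false, Prod.mk.injEq]
        rintro ⟨j, _, hj2⟩; exact hv (j + 1) hj2.symm
      rw [hout, hin]

lemma bal_ray {H : SimpleGraph V} (f : ℤ → V) (hinj : Function.Injective f)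
    (hadj : ∀ n : ℤ, H.Adj (f n) (f (n + 1))) :
    ∃ D : Set (V × V), D.Nonempty ∧ Bal H D := by
  refine ⟨{p | ∃ i, p = (f i, f (i + 1))}, ⟨(f 0, f 1), ⟨0, by simp⟩⟩, ?_, ?_, ?_⟩
  · rintro p ⟨i, rfl⟩; exact hadj i
  · rintro u v ⟨i, hi⟩ ⟨j, hj⟩
    simp only [Prod.mk.injEq] at hi hj
    obtain ⟨hi1, hi2⟩ := hi; obtain ⟨hj1, hj2⟩ := hj
    have h1 : j = i + 1 := hinj (by rw [← hj1, ← hi2])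
    have h2 : i = j + 1 := hinj (by rw [← hi1, ← hj2])
    omega
  · intro v
    by_cases hv : ∃ i, f i = v
    · obtain ⟨i, rfl⟩ := hv
      have hout : {u | (f i, u) ∈ {p : V × V | ∃ i, p = (f i, f (i + 1))}} = {f (i + 1)} := by
        ext u; simp only [Set.mem_setOf_eq, Set.mem_singleton_iff, Prod.mk.injEq]
        constructor
        · rintro ⟨j, hj1, hj2⟩; rw [← hinj hj1] at hj2; exact hj2
        · rintro rfl; exact ⟨i, rfl, rfl⟩
      have hin : {u | (u, f i) ∈ {p : V × V | ∃ i, p = (f i, f (i + 1))}} = {f (i - 1)} := by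
        ext u; simp only [Set.mem_setOf_eq, Set.mem_singleton_iff, Prod.mk.injEq]
        constructor
        · rintro ⟨j, hj1, hj2⟩
          have hji : j = i - 1 := by have := hinj hj2.symm; omega
          rw [hji] at hj1; exact hj1
        · rintro rfl; exact ⟨i - 1, rfl, by rw [sub_add_cancel]⟩
      rw [hout, hin, Set.ncard_singleton, Set.ncard_singleton]
    · push_neg at hv
      have hout : {u | (v, u) ∈ {p : V × V | ∃ i, p = (f i, f (i + 1))}} = ∅ := by
        ext u; simp only [Set.mem_setOf_eq, Set.mem_empty_iff_false, iff_false, Prod.mk.injEq]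
        rintro ⟨j, hj1, _⟩; exact hv j hj1.symm
      have hin : {u | (u, v) ∈ {p : V × V | ∃ i, p = (f i, f (i + 1))}} = ∅ := by
        ext u; simp only [Set.mem_setOf_eq, Set.mem_empty_iff_false, iff_false, Prod.mk.injEq]
        rintro ⟨j, _, hj2⟩; exact hv (j + 1) hj2.symm
      rw [hout, hin]





lemma cycle_of_path {H : SimpleGraph V} {N : ℕ} (hN : 3 ≤ N) (p : ℕ → V)
    (hinj : ∀ i < N, ∀ j < N, p i = p j → i = j)
    (hadj : ∀ i : ℕ, i + 1 < N → H.Adj (p i) (p (i + 1)))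
    (hclose : H.Adj (p (N - 1)) (p 0)) : HasCyc H := by
  haveI : NeZero N := ⟨by omega⟩
  haveI : Fact (1 < N) := ⟨by omega⟩
  refine ⟨N, hN, fun i => p i.val, ?_, ?_⟩
  · intro i j h
    have := hinj _ (ZMod.val_lt i) _ (ZMod.val_lt j) h
    exact ZMod.val_injective N this
  · intro i
    have hval : (i + 1).val = (i.val + 1) % N := by
      rw [ZMod.val_add, ZMod.val_one]
    by_cases h : i.val + 1 < N
    · simp only [hval, Nat.mod_eq_of_lt h]
      exact hadj i.val h
    · have hv : i.val = N - 1 := by have := ZMod.val_lt i; omega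
      have : (i + 1).val = 0 := by
        rw [hval, hv]; have : N - 1 + 1 = N := by omega
        rw [this, Nat.mod_self]
      simp only [this, hv]
      exact hclose

lemma chain'_getD {α : Type*} {R : α → α → Prop} {l : List α} (h : l.Chain' R) (d : α) :
    ∀ i : ℕ, i + 1 < l.length → R (l.getD i d) (l.getD (i + 1) d) := by
  intro i hi
  rw [List.getD_eq_getElem l d (by omega), List.getD_eq_getElem l d hi]
  exact List.isChain_iff_getElem.mp h i (by omega)

lemma nodup_getD {α : Type*} {l : List α} (h : l.Nodup) (d : α) :
    ∀ i < l.length, ∀ j < l.length, l.getD i d = l.getD j d → i = j := by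
  intro i hi j hj hij
  rw [List.getD_eq_getElem l d hi, List.getD_eq_getElem l d hj] at hij
  exact List.Nodup.getElem_inj_iff h |>.mp hij

lemma exists_other {H : SimpleGraph V} (hfin : ∀ v, (H.neighborSet v).Finite)
    (heven : ∀ v, Even (H.neighborSet v).ncard) {u v : V} (huv : H.Adj u v) :
    ∃ w, H.Adj u w ∧ w ≠ v := by
  by_contra h; push_neg at h
  have hset : H.neighborSet u = {v} := by
    apply subset_antisymm
    · intro w hw; exact h w hw
    · intro w hw; simp only [Set.mem_singleton_iff] at hw; subst hw; exact huv
  have he := heven u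
  rw [hset, Set.ncard_singleton] at he
  simp at he

lemma cyc_of_list {H : SimpleGraph V} {l : List V} (hc : l.Chain' H.Adj) (hn : l.Nodup)
    {k : ℕ} (hk2 : 2 ≤ k) (hkl : k < l.length) {d : V}
    (hcl : H.Adj (l.getD 0 d) (l.getD k d)) : HasCyc H := by
  apply cycle_of_path (N := k + 1) (by omega) (fun i => l.getD (k - i) d)
  · intro i hi j hj hij
    have := nodup_getD hn d (k - i) (by omega) (k - j) (by omega) hij
    omega
  · intro i hi
    have h1 : k - i = (k - i - 1) + 1 := by omega
    have := chain'_getD hc d (k - i - 1) (by omega)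
    rw [← h1] at this
    have h2 : k - (i + 1) = k - i - 1 := by omega
    rw [h2]
    exact this.symm
  · simp only [Nat.add_sub_cancel, Nat.sub_self, Nat.sub_zero]
    exact hcl

lemma cyc_of_list_ray {H : SimpleGraph V} (x : ℕ → V)
    (hx : ∀ n, H.Adj (x n) (x (n + 1))) (hxi : Function.Injective x)
    {l : List V} (hc : l.Chain' H.Adj) (hn : l.Nodup) (hlen : 2 ≤ l.length) {d : V}
    (hlast : l.getD (l.length - 1) d = x 0)
    (havoid : ∀ v ∈ l.dropLast, v ∉ Set.range x)
    {k : ℕ} (hk : 1 ≤ k) (hcl : H.Adj (l.getD 0 d) (x k)) : HasCyc H := by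
  set L := l.length with hL
  have hmemdrop : ∀ m, m < L - 1 → l.getD m d ∈ l.dropLast := by
    intro m hm
    rw [List.getD_eq_getElem l d (by omega)]
    have : l[m] = l.dropLast[m]'(by rw [List.length_dropLast]; omega) :=
      (List.getElem_dropLast (by rw [List.length_dropLast]; omega)).symm
    rw [this]
    exact List.getElem_mem _
  apply cycle_of_path (N := k + L) (by omega)
    (fun i => if i < k then x (k - i) else l.getD (L - 1 - (i - k)) d)
  · intro i hi j hj hij
    by_cases h1 : i < k <;> by_cases h2 : j < k <;> simp only [h1, h2, if_pos, if_neg,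
      if_true, if_false] at hij
    · exact by have := hxi hij; omega
    · exfalso
      by_cases hm : L - 1 - (j - k) < L - 1
      · exact havoid _ (hmemdrop _ hm) ⟨k - i, hij⟩
      · have hj' : L - 1 - (j - k) = L - 1 := by omega
        rw [hj', hlast] at hij
        have := hxi hij; omega
    · exfalso
      by_cases hm : L - 1 - (i - k) < L - 1
      · exact havoid _ (hmemdrop _ hm) ⟨k - j, hij.symm⟩
      · have hi' : L - 1 - (i - k) = L - 1 := by omega
        rw [hi', hlast] at hij
        have := hxi hij.symm; omega
    · have := nodup_getD hn d _ (by omega) _ (by omega) hij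
      omega
  · intro i hi
    by_cases h1 : i + 1 < k
    · simp only [if_pos (by omega : i < k), if_pos h1]
      have h2 : k - i = (k - (i + 1)) + 1 := by omega
      rw [h2]
      exact (hx _).symm
    · by_cases h2 : i < k
      · -- i = k - 1, next is l.getD (L-1) = x 0
        simp only [if_pos h2, if_neg h1]
        have h3 : k - i = 1 := by omega
        have h4 : L - 1 - (i + 1 - k) = L - 1 := by omega
        rw [h3, h4, hlast]
        exact (hx 0).symm
      · simp only [if_neg h2, if_neg (by omega : ¬ i + 1 < k)]
        have h5 : L - 1 - (i - k) = (L - 1 - (i + 1 - k)) + 1 := by omega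
        rw [h5]
        exact (chain'_getD hc d _ (by omega)).symm
  · have h6 : ¬ (k + L - 1 < k) := by omega
    simp only [if_neg h6, if_pos hk]
    have h7 : L - 1 - (k + L - 1 - k) = 0 := by omega
    rw [h7, if_pos (show 0 < k by omega), Nat.sub_zero]
    exact hcl



lemma headI_getD {α : Type*} [Inhabited α] {l : List α} (h : l ≠ []) (d : α) : l.getD 0 d = l.headI := by
  cases l with
  | nil => exact absurd rfl h
  | cons c cs => rfl

lemma headI_mem {α : Type*} [Inhabited α] {l : List α} (h : l ≠ []) : l.headI ∈ l := by
  cases l with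
  | nil => exact absurd rfl h
  | cons c cs => exact List.mem_cons_self

lemma chain'_cons_of {α : Type*} {R : α → α → Prop} {l : List α} {w : α} {d : α}
    (hl : l ≠ []) (h : R w (l.getD 0 d)) (hc : l.Chain' R) : (w :: l).Chain' R := by
  cases l with
  | nil => exact absurd rfl hl
  | cons c cs => exact List.isChain_cons_cons.mpr ⟨h, hc⟩

lemma chain'_head {α : Type*} [Inhabited α] {R : α → α → Prop} {l : List α} {w : α}
    (hc : (w :: l).Chain' R) (hl : l ≠ []) : R w l.headI := by
  cases l with
  | nil => exact absurd rfl hl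
  | cons c cs => exact (List.isChain_cons_cons.mp hc).1

lemma exists_seq {α : Type*} (Q : List α → Prop) (l0 : List α) (h0 : Q l0)
    (hstep : ∀ l, Q l → ∃ w, Q (w :: l)) :
    ∃ X : ℕ → List α, X 0 = l0 ∧ ∀ n, Q (X n) ∧ ∃ w, X (n + 1) = w :: X n := by
  choose f hf using hstep
  let g : ℕ → {l : List α // Q l} := fun n =>
    Nat.rec ⟨l0, h0⟩ (fun _ p => ⟨f p.1 p.2 :: p.1, hf p.1 p.2⟩) n
  exact ⟨fun n => (g n).1, rfl, fun n => ⟨(g n).2, f (g n).1 (g n).2, rfl⟩⟩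

section SeqFacts

variable [Inhabited V] {X : ℕ → List V}

lemma seq_mono (hX : ∀ n, ∃ w, X (n + 1) = w :: X n) :
    ∀ n m, n ≤ m → ∀ v ∈ X n, v ∈ X m := by
  intro n m hnm
  induction m, hnm using Nat.le_induction with
  | base => exact fun v hv => hv
  | succ m hm ih =>
    intro v hv
    obtain ⟨w, hw⟩ := hX m
    rw [hw]
    exact List.mem_cons_of_mem _ (ih v hv)

lemma seq_inj (hX : ∀ n, ∃ w, X (n + 1) = w :: X n) (hnd : ∀ n, (X n).Nodup)
    (hne : ∀ n, X n ≠ []) : Function.Injective (fun n => (X n).headI) := by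
  have key : ∀ n m, n < m → (X n).headI ≠ (X m).headI := by
    intro n m hnm
    obtain ⟨m', rfl⟩ : ∃ m', m = m' + 1 := ⟨m - 1, by omega⟩
    obtain ⟨w, hw⟩ := hX m'
    have hmem : (X n).headI ∈ X m' := seq_mono hX n m' (by omega) _ (headI_mem (hne n))
    have hnodup := hnd (m' + 1)
    rw [hw] at hnodup ⊢
    simp only [List.headI]
    intro hcon
    rw [← hcon] at hnodup
    exact (List.nodup_cons.mp hnodup).1 hmem
  intro n m h
  by_contra hne'
  rcases lt_trichotomy n m with h1 | h1 | h1
  · exact key n m h1 h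
  · exact hne' h1
  · exact key m n h1 h.symm

lemma seq_adj {H : SimpleGraph V} (hX : ∀ n, ∃ w, X (n + 1) = w :: X n)
    (hch : ∀ n, (X n).Chain' H.Adj) (hne : ∀ n, X n ≠ []) :
    ∀ n, H.Adj ((X (n + 1)).headI) ((X n).headI) := by
  intro n
  obtain ⟨w, hw⟩ := hX n
  have := hch (n + 1)
  rw [hw] at this ⊢
  simp only [List.headI]
  exact chain'_head this (hne n)

lemma seq_len (hX : ∀ n, ∃ w, X (n + 1) = w :: X n) :
    ∀ n, (X n).length = n + (X 0).length := by
  intro n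
  induction n with
  | zero => omega
  | succ n ih => obtain ⟨w, hw⟩ := hX n; rw [hw]; simp [ih]; omega

end SeqFacts


end BalAux
namespace BalAux

variable {V : Type*}

lemma getD_last_append {α : Type*} [Inhabited α] (t : List α) (u v : α) :
    (t ++ [u, v]).getD ((t ++ [u, v]).length - 1) default = v := by
  rw [List.getD_eq_getElem _ _ (by simp)]
  rw [List.getElem_append_right (by simp)]
  simp

lemma dropLast_append_pair {α : Type*} (t : List α) (u v : α) :
    (t ++ [u, v]).dropLast = t ++ [u] := by
  rw [show t ++ [u, v] = (t ++ [u]) ++ [v] by simp, List.dropLast_concat]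

lemma headI_append {α : Type*} [Inhabited α] {t : List α} (h : t ≠ []) (s : List α) :
    (t ++ s).headI = t.headI := by
  cases t with
  | nil => exact absurd rfl h
  | cons c cs => rfl

lemma key {H : SimpleGraph V} (hfin : ∀ v, (H.neighborSet v).Finite)
    (heven : ∀ v, Even (H.neighborSet v).ncard) {a b : V} (hab : H.Adj a b) :
    ∃ D : Set (V × V), D.Nonempty ∧ Bal H D := by
  classical
  haveI : Inhabited V := ⟨a⟩
  by_cases hcyc : HasCyc H
  · exact bal_cycle hcyc
  have step0 : ∀ l : List V, l.Chain' H.Adj → l.Nodup → 2 ≤ l.length →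
      ∃ w, H.Adj (l.getD 0 default) w ∧ w ∉ l := by
    intro l hc hn hlen
    have hadj01 : H.Adj (l.getD 0 default) (l.getD 1 default) :=
      chain'_getD hc default 0 (by omega)
    obtain ⟨w, hw, hws⟩ := exists_other hfin heven hadj01
    refine ⟨w, hw, ?_⟩
    intro hmem
    obtain ⟨k, hk, hkw⟩ := List.mem_iff_getElem.mp hmem
    have hkD : l.getD k default = w := by rw [List.getD_eq_getElem l default hk]; exact hkw
    have hk0 : k ≠ 0 := by
      rintro rfl
      rw [hkD] at hw
      exact H.irrefl hw
    have hk1 : k ≠ 1 := fun h => hws (by rw [← hkD, h])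
    exact hcyc (cyc_of_list hc hn (by omega) hk (by rw [hkD]; exact hw))
  -- forward sequence
  have hQx0 : ([b, a] : List V).Chain' H.Adj ∧ ([b, a] : List V).Nodup ∧
      ∃ t : List V, [b, a] = t ++ [b, a] := by
    refine ⟨List.isChain_cons_cons.mpr ⟨hab.symm, List.isChain_singleton a⟩, ?_, [], rfl⟩
    simp [hab.ne']
  have hstepx : ∀ l, (l.Chain' H.Adj ∧ l.Nodup ∧ ∃ t, l = t ++ [b, a]) →
      ∃ w, ((w :: l).Chain' H.Adj ∧ (w :: l).Nodup ∧ ∃ t, w :: l = t ++ [b, a]) := by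
    rintro l ⟨hc, hn, t, ht⟩
    have hlen : 2 ≤ l.length := by rw [ht]; simp
    obtain ⟨w, hw, hwl⟩ := step0 l hc hn hlen
    exact ⟨w, chain'_cons_of (by rw [ht]; simp) hw.symm hc,
      List.nodup_cons.mpr ⟨hwl, hn⟩, w :: t, by rw [ht]; rfl⟩
  obtain ⟨X, hX0, hXp⟩ := exists_seq
    (fun l => l.Chain' H.Adj ∧ l.Nodup ∧ ∃ t, l = t ++ [b, a]) [b, a] hQx0 hstepx
  have hXcons : ∀ n, ∃ w, X (n + 1) = w :: X n := fun n => (hXp n).2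
  have hXne : ∀ n, X n ≠ [] := by
    intro n
    obtain ⟨t, ht⟩ := (hXp n).1.2.2
    rw [ht]; simp
  set x : ℕ → V := fun n => (X n).headI with hxdef
  have hxinj : Function.Injective x := seq_inj hXcons (fun n => (hXp n).1.2.1) hXne
  have hxadj : ∀ n, H.Adj (x n) (x (n + 1)) :=
    fun n => (seq_adj hXcons (fun n => (hXp n).1.1) hXne n).symm
  have hx0 : x 0 = b := by simp only [hxdef, hX0]; rfl
  have hxa : ∀ n, x n ≠ a := by
    intro n
    cases n with
    | zero => rw [hx0]; exact hab.ne'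
    | succ n =>
      obtain ⟨w, hw⟩ := hXcons n
      have hnodup := (hXp (n + 1)).1.2.1
      rw [hw] at hnodup
      have haw : a ∈ X n := by
        obtain ⟨t, ht⟩ := (hXp n).1.2.2
        rw [ht]; simp
      have : x (n + 1) = w := by simp only [hxdef, hw]; rfl
      rw [this]
      rintro rfl
      exact (List.nodup_cons.mp hnodup).1 haw
  have hanr : a ∉ Set.range x := by rintro ⟨n, hn⟩; exact hxa n hn
  -- backward sequence
  have hQy0 : ([a, b] : List V).Chain' H.Adj ∧ ([a, b] : List V).Nodup ∧
      ∃ t : List V, [a, b] = t ++ [a, b] ∧ ∀ v ∈ t, v ∉ Set.range x := by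
    refine ⟨List.isChain_cons_cons.mpr ⟨hab, List.isChain_singleton b⟩, ?_, [], rfl, by simp⟩
    simp [hab.ne]
  have hstepy : ∀ l, (l.Chain' H.Adj ∧ l.Nodup ∧
        ∃ t, l = t ++ [a, b] ∧ ∀ v ∈ t, v ∉ Set.range x) →
      ∃ w, ((w :: l).Chain' H.Adj ∧ (w :: l).Nodup ∧
        ∃ t, w :: l = t ++ [a, b] ∧ ∀ v ∈ t, v ∉ Set.range x) := by
    rintro l ⟨hc, hn, t, ht, htav⟩
    have hlen : 2 ≤ l.length := by rw [ht]; simp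
    obtain ⟨w, hw, hwl⟩ := step0 l hc hn hlen
    have hwr : w ∉ Set.range x := by
      rintro ⟨k, rfl⟩
      have hk0 : k ≠ 0 := by
        rintro rfl
        rw [hx0] at hwl
        exact hwl (by rw [ht]; simp)
      apply hcyc
      apply cyc_of_list_ray x hxadj hxinj hc hn hlen (d := default) ?_ ?_ (by omega) hw
      · rw [ht, getD_last_append, hx0]
      · rw [ht, dropLast_append_pair]
        intro v hv
        rcases List.mem_append.mp hv with h1 | h1
        · exact htav v h1
        · simp only [List.mem_singleton] at h1
          subst h1; exact hanr
    refine ⟨w, chain'_cons_of (by rw [ht]; simp) hw.symm hc,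
      List.nodup_cons.mpr ⟨hwl, hn⟩, w :: t, by rw [ht]; rfl, ?_⟩
    intro v hv
    rcases List.mem_cons.mp hv with h1 | h1
    · subst h1; exact hwr
    · exact htav v h1
  obtain ⟨Y, hY0, hYp⟩ := exists_seq
    (fun l => l.Chain' H.Adj ∧ l.Nodup ∧ ∃ t, l = t ++ [a, b] ∧ ∀ v ∈ t, v ∉ Set.range x)
    [a, b] hQy0 hstepy
  have hYcons : ∀ n, ∃ w, Y (n + 1) = w :: Y n := fun n => (hYp n).2
  have hYne : ∀ n, Y n ≠ [] := by
    intro n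
    obtain ⟨t, ht, -⟩ := (hYp n).1.2.2
    rw [ht]; simp
  set y : ℕ → V := fun n => (Y n).headI with hydef
  have hyinj : Function.Injective y := seq_inj hYcons (fun n => (hYp n).1.2.1) hYne
  have hyadj : ∀ n, H.Adj (y (n + 1)) (y n) :=
    seq_adj hYcons (fun n => (hYp n).1.1) hYne
  have hy0 : y 0 = a := by simp only [hydef, hY0]; rfl
  have hYlen : ∀ n, (Y n).length = n + 2 := by
    intro n
    have := seq_len hYcons n
    rw [hY0] at this
    simpa using this
  have hyr : ∀ n, 1 ≤ n → y n ∉ Set.range x := by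
    intro n hn
    obtain ⟨t, ht, htav⟩ := (hYp n).1.2.2
    have htne : t ≠ [] := by
      rintro rfl
      have := hYlen n
      rw [ht] at this
      simp at this
      omega
    have : y n = t.headI := by simp only [hydef, ht]; exact headI_append htne _
    rw [this]
    exact htav _ (headI_mem htne)
  -- the double ray
  set f : ℤ → V := fun n => if 1 ≤ n then x (n - 1).toNat else y (-n).toNat with hfdef
  have hfinj : Function.Injective f := by
    intro m n h
    simp only [hfdef] at h
    by_cases h1 : 1 ≤ m <;> by_cases h2 : 1 ≤ n <;>
      simp only [h1, h2, if_pos, if_neg, if_true, if_false] at h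
    · have := hxinj h; omega
    · exfalso
      by_cases h3 : n = 0
      · subst h3
        simp only [neg_zero, Int.toNat_zero, hy0] at h
        exact hxa _ h
      · exact hyr (-n).toNat (by omega) ⟨_, h⟩
    · exfalso
      by_cases h3 : m = 0
      · subst h3
        simp only [neg_zero, Int.toNat_zero, hy0] at h
        exact hxa _ h.symm
      · exact hyr (-m).toNat (by omega) ⟨_, h.symm⟩
    · have := hyinj h; omega
  have hfadj : ∀ n : ℤ, H.Adj (f n) (f (n + 1)) := by
    intro n
    by_cases h1 : 1 ≤ n
    · simp only [hfdef, if_pos h1, if_pos (by omega : (1:ℤ) ≤ n + 1)]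
      have : (n + 1 - 1).toNat = (n - 1).toNat + 1 := by omega
      rw [this]
      exact hxadj _
    · by_cases h2 : n = 0
      · subst h2
        simp only [hfdef, if_neg (by omega : ¬ (1:ℤ) ≤ 0), if_pos le_refl]
        simpa [hy0, hx0] using hab
      · simp only [hfdef, if_neg h1, if_neg (by omega : ¬ (1:ℤ) ≤ n + 1)]
        have : (-n).toNat = (-(n + 1)).toNat + 1 := by omega
        rw [this]
        exact hyadj _
  exact bal_ray f hfinj hfadj

end BalAux
namespace BalAux

variable {V : Type*}

lemma chain_finite_subset {α : Type*} {c : Set (Set α)} (hc : IsChain (· ⊆ ·) c)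
    (hne : c.Nonempty) {s : Set α} (hs : s.Finite) :
    s ⊆ ⋃₀ c → ∃ D ∈ c, s ⊆ D := by
  refine Set.Finite.induction_on s hs ?_ ?_
  · intro _
    obtain ⟨D, hD⟩ := hne
    exact ⟨D, hD, by simp⟩
  · intro a s' ha hs' ih hsub
    obtain ⟨D1, hD1c, hD1⟩ := ih (fun z hz => hsub (Set.mem_insert_of_mem _ hz))
    obtain ⟨D2, hD2c, hD2⟩ := hsub (Set.mem_insert _ _)
    by_cases heq : D1 = D2
    · exact ⟨D2, hD2c, by
        rintro z hz
        rcases Set.mem_insert_iff.mp hz with rfl | hz'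
        · exact hD2
        · exact heq ▸ hD1 hz'⟩
    · rcases hc hD1c hD2c heq with h | h
      · exact ⟨D2, hD2c, by
          rintro z hz
          rcases Set.mem_insert_iff.mp hz with rfl | hz'
          · exact hD2
          · exact h (hD1 hz')⟩
      · exact ⟨D1, hD1c, by
          rintro z hz
          rcases Set.mem_insert_iff.mp hz with rfl | hz'
          · exact h hD2
          · exact hD1 hz'⟩

lemma ncard_neighborSet (G : SimpleGraph V) [G.LocallyFinite] (v : V) :
    (G.neighborSet v).ncard = G.degree v := by
  rw [SimpleGraph.degree, ← Set.ncard_coe_finset, SimpleGraph.neighborFinset_def,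
    Set.coe_toFinset]

end BalAux

open BalAux in
/-- An at most countable simple graph with uniformly bounded vertex degrees admits a
balanced orientation (a relation `r` selecting exactly one direction for each edge,
with equal out- and in-degree at every vertex) iff every vertex has even degree. -/
theorem stmt0 (V : Type*) [Countable V] (G : SimpleGraph V) [G.LocallyFinite]
    (c : ℕ) (hc : 0 < c) (hdeg : ∀ v : V, G.degree v ≤ c) :
    (∃ r : V → V → Prop,
      (∀ u v : V, r u v → G.Adj u v) ∧
      (∀ u v : V, G.Adj u v → Xor' (r u v) (r v u)) ∧
      (∀ v : V, {u : V | r v u}.ncard = {u : V | r u v}.ncard)) ↔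
    (∀ v : V, Even (G.degree v)) := by
  classical
  constructor
  · rintro ⟨r, hr1, hr2, hr3⟩ v
    have hON : {u | r v u} ⊆ G.neighborSet v := fun u hu => hr1 v u hu
    have hIN : {u | r u v} ⊆ G.neighborSet v := fun u hu => (hr1 u v hu).symm
    have hNfin : (G.neighborSet v).Finite := Set.toFinite _
    have hcover : G.neighborSet v = {u | r v u} ∪ {u | r u v} := by
      ext u
      constructor
      · intro hu
        rcases hr2 v u hu with ⟨h1, -⟩ | ⟨h1, -⟩
        · exact Or.inl h1
        · exact Or.inr h1
      · rintro (h | h)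
        · exact hON h
        · exact hIN h
    have hdisj : Disjoint {u | r v u} {u | r u v} := by
      rw [Set.disjoint_left]
      intro u h1 h2
      rcases hr2 v u (hr1 v u h1) with ⟨-, h4⟩ | ⟨-, h4⟩
      · exact h4 h2
      · exact h4 h1
    have : G.degree v = {u | r v u}.ncard + {u | r u v}.ncard := by
      rw [← ncard_neighborSet, hcover,
        Set.ncard_union_eq hdisj (hNfin.subset hON) (hNfin.subset hIN)]
    rw [this, ← hr3 v]
    exact Even.add_self _
  · intro heven
    have hub : ∀ ch ⊆ {D : Set (V × V) | Bal G D}, IsChain (· ⊆ ·) ch →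
        ∃ ub ∈ {D : Set (V × V) | Bal G D}, ∀ s ∈ ch, s ⊆ ub := by
      intro ch hchS hchain
      by_cases hne : ch.Nonempty
      · refine ⟨⋃₀ ch, ⟨?_, ?_, ?_⟩, fun s hs => Set.subset_sUnion_of_mem hs⟩
        · rintro p ⟨D0, hD0, hp⟩
          exact (hchS hD0).1 p hp
        · rintro u v ⟨D1, hD1, h1⟩ ⟨D2, hD2, h2⟩
          by_cases heq : D1 = D2
          · subst heq; exact (hchS hD1).2.1 u v h1 h2
          · rcases hchain hD1 hD2 heq with h | h
            · exact (hchS hD2).2.1 u v (h h1) h2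
            · exact (hchS hD1).2.1 u v h1 (h h2)
        · intro v
          have hOsub : {u | (v, u) ∈ ⋃₀ ch} ⊆ G.neighborSet v := by
            rintro u ⟨D0, hD0, hp⟩
            exact (hchS hD0).1 (v, u) hp
          have hIsub : {u | (u, v) ∈ ⋃₀ ch} ⊆ G.neighborSet v := by
            rintro u ⟨D0, hD0, hp⟩
            exact ((hchS hD0).1 (u, v) hp).symm
          have hOfin : {u | (v, u) ∈ ⋃₀ ch}.Finite := (Set.toFinite _).subset hOsub
          have hIfin : {u | (u, v) ∈ ⋃₀ ch}.Finite := (Set.toFinite _).subset hIsub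
          have hsfin : ((fun u => (v, u)) '' {u | (v, u) ∈ ⋃₀ ch} ∪
              (fun u => (u, v)) '' {u | (u, v) ∈ ⋃₀ ch}).Finite :=
            (hOfin.image _).union (hIfin.image _)
          obtain ⟨D0, hD0c, hD0⟩ := chain_finite_subset hchain hne hsfin (by
            rintro p (⟨u, hu, rfl⟩ | ⟨u, hu, rfl⟩)
            · exact hu
            · exact hu)
          have hO : {u | (v, u) ∈ ⋃₀ ch} = {u | (v, u) ∈ D0} := by
            ext u
            constructor
            · intro hu
              exact hD0 (Or.inl ⟨u, hu, rfl⟩)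
            · intro hu
              exact ⟨D0, hD0c, hu⟩
          have hI : {u | (u, v) ∈ ⋃₀ ch} = {u | (u, v) ∈ D0} := by
            ext u
            constructor
            · intro hu
              exact hD0 (Or.inr ⟨u, hu, rfl⟩)
            · intro hu
              exact ⟨D0, hD0c, hu⟩
          rw [hO, hI]
          exact (hchS hD0c).2.2 v
      · rw [Set.not_nonempty_iff_eq_empty] at hne
        subst hne
        refine ⟨∅, ⟨by simp, by simp, fun v => by simp⟩, by simp⟩
    obtain ⟨D, hDS, hDmax⟩ := zorn_subset {D : Set (V × V) | Bal G D} hub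
    have hcov : ∀ u v : V, G.Adj u v → (u, v) ∈ D ∨ (v, u) ∈ D := by
      by_contra h
      push_neg at h
      obtain ⟨a, b, hab, hD1, hD2⟩ := h
      set H : SimpleGraph V :=
        { Adj := fun u v => G.Adj u v ∧ (u, v) ∉ D ∧ (v, u) ∉ D
          symm := ⟨by rintro u v ⟨h1, h2, h3⟩; exact ⟨h1.symm, h3, h2⟩⟩
          loopless := ⟨fun v hv => G.irrefl hv.1⟩ } with hHdef
      have hHsub : ∀ v, H.neighborSet v ⊆ G.neighborSet v := fun v u hu => hu.1
      have hHfin : ∀ v, (H.neighborSet v).Finite :=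
        fun v => (Set.toFinite (G.neighborSet v)).subset (hHsub v)
      have hHeven : ∀ v, Even (H.neighborSet v).ncard := by
        intro v
        have hOsub : {u | (v, u) ∈ D} ⊆ G.neighborSet v := fun u hu => hDS.1 (v, u) hu
        have hIsub : {u | (u, v) ∈ D} ⊆ G.neighborSet v := fun u hu => (hDS.1 (u, v) hu).symm
        have hNfin : (G.neighborSet v).Finite := Set.toFinite _
        have hcover : G.neighborSet v =
            H.neighborSet v ∪ ({u | (v, u) ∈ D} ∪ {u | (u, v) ∈ D}) := by
          ext u
          constructor
          · intro hu
            by_cases h1 : (v, u) ∈ D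
            · exact Or.inr (Or.inl h1)
            · by_cases h2 : (u, v) ∈ D
              · exact Or.inr (Or.inr h2)
              · exact Or.inl ⟨hu, h1, h2⟩
          · rintro (hu | hu | hu)
            · exact hu.1
            · exact hOsub hu
            · exact hIsub hu
        have hd1 : Disjoint {u | (v, u) ∈ D} {u | (u, v) ∈ D} := by
          rw [Set.disjoint_left]
          intro u h1 h2
          exact hDS.2.1 v u h1 h2
        have hd2 : Disjoint (H.neighborSet v) ({u | (v, u) ∈ D} ∪ {u | (u, v) ∈ D}) := by
          rw [Set.disjoint_left]
          rintro u hu (h1 | h1)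
          · exact hu.2.1 h1
          · exact hu.2.2 h1
        have hncard : (G.neighborSet v).ncard = (H.neighborSet v).ncard +
            ({u | (v, u) ∈ D}.ncard + {u | (u, v) ∈ D}.ncard) := by
          rw [hcover, Set.ncard_union_eq hd2 (hHfin v)
            ((hNfin.subset hOsub).union (hNfin.subset hIsub)),
            Set.ncard_union_eq hd1 (hNfin.subset hOsub) (hNfin.subset hIsub)]
        have hGev : Even (G.neighborSet v).ncard := by
          rw [ncard_neighborSet]; exact heven v
        have hbal := hDS.2.2 v
        rw [Nat.even_iff] at hGev ⊢
        omega
      obtain ⟨D', hD'ne, hD'bal⟩ := key hHfin hHeven (show H.Adj a b from ⟨hab, hD1, hD2⟩)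
      have hD'adj : ∀ u v : V, (u, v) ∈ D' → G.Adj u v ∧ (u, v) ∉ D ∧ (v, u) ∉ D :=
        fun u v h => hD'bal.1 (u, v) h
      have hD'disj : ∀ p ∈ D', p ∉ D := by
        intro p hp
        exact (hD'adj p.1 p.2 hp).2.1
      have hDD' : Bal G (D ∪ D') := by
        refine ⟨?_, ?_, ?_⟩
        · rintro p (hp | hp)
          · exact hDS.1 p hp
          · exact (hD'bal.1 p hp).1
        · rintro u v (h1 | h1) (h2 | h2)
          · exact hDS.2.1 u v h1 h2
          · exact (hD'adj v u h2).2.2 h1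
          · exact (hD'adj u v h1).2.2 h2
          · exact hD'bal.2.1 u v h1 h2
        · intro v
          have hOeq : {u | (v, u) ∈ D ∪ D'} = {u | (v, u) ∈ D} ∪ {u | (v, u) ∈ D'} := by
            ext u; simp [Set.mem_union]
          have hIeq : {u | (u, v) ∈ D ∪ D'} = {u | (u, v) ∈ D} ∪ {u | (u, v) ∈ D'} := by
            ext u; simp [Set.mem_union]
          have hNfin : (G.neighborSet v).Finite := Set.toFinite _
          have f1 : {u | (v, u) ∈ D}.Finite :=
            hNfin.subset (fun u hu => hDS.1 (v, u) hu)
          have f2 : {u | (v, u) ∈ D'}.Finite :=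
            hNfin.subset (fun u hu => (hD'adj v u hu).1)
          have f3 : {u | (u, v) ∈ D}.Finite :=
            hNfin.subset (fun u hu => (hDS.1 (u, v) hu).symm)
          have f4 : {u | (u, v) ∈ D'}.Finite :=
            hNfin.subset (fun u hu => ((hD'adj u v hu).1).symm)
          have hdo : Disjoint {u | (v, u) ∈ D} {u | (v, u) ∈ D'} := by
            rw [Set.disjoint_left]
            intro u h1 h2
            exact (hD'adj v u h2).2.1 h1
          have hdi : Disjoint {u | (u, v) ∈ D} {u | (u, v) ∈ D'} := by
            rw [Set.disjoint_left]
            intro u h1 h2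
            exact (hD'adj u v h2).2.1 h1
          rw [hOeq, hIeq, Set.ncard_union_eq hdo f1 f2, Set.ncard_union_eq hdi f3 f4,
            hDS.2.2 v, hD'bal.2.2 v]
      obtain ⟨p, hp⟩ := hD'ne
      have hsub : D ⊆ D ∪ D' := Set.subset_union_left
      have hmem : D ∪ D' ∈ {E : Set (V × V) | Bal G E} := hDD'
      have := hDmax hmem hsub
      exact hD'disj p hp (this (Or.inr hp))
    refine ⟨fun u v => (u, v) ∈ D, ?_, ?_, ?_⟩
    · intro u v huv
      exact hDS.1 (u, v) huv
    · intro u v huv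
      rcases hcov u v huv with h | h
      · exact Or.inl ⟨h, hDS.2.1 u v h⟩
      · exact Or.inr ⟨h, fun h' => hDS.2.1 u v h' h⟩
    · exact hDS.2.2
end

section
/- Let N ≥ 1, let d : Fin N → ℝ be positive arc lengths with total length L = ∑_j d(j), let α : Fin N → ℝ, and let k ∈ ℝ. There exists a family of coefficients c : Fin N → ℂ, not all zero, satisfying the cyclic transfer conditions c((j+1) mod N) = exp(i·α(j))·exp(i·k·d(j))·c(j) for every j ∈ Fin N, if and only if there exists n ∈ ℤ with k = (2πn − ∑_j α(j)) / L. -/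
open Finset Complex
open Fin.NatCast

/-- The spectrum of a momentum operator on a loop graph with `N` vertices and arc
lengths `d j`, vertex phases `α j`: a nonzero family of coefficients satisfying the
cyclic transfer conditions exists iff `k = (2πn - ∑ α j)/L` with `L = ∑ d j`. -/
theorem stmt6 (N : ℕ) [NeZero N] (hN : 1 ≤ N) (d : Fin N → ℝ) (hd : ∀ j, 0 < d j)
    (α : Fin N → ℝ) (k : ℝ) :
    (∃ c : Fin N → ℂ, c ≠ 0 ∧ ∀ j : Fin N,
        c (j + 1) = Complex.exp (Complex.I * (α j : ℂ)) *
          Complex.exp (Complex.I * (k : ℂ) * (d j : ℂ)) * c j) ↔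
    ∃ n : ℤ, k = (2 * Real.pi * n - ∑ j, α j) / (∑ j, d j) := by
  haveI : Nonempty (Fin N) := Fin.pos_iff_nonempty.mp (NeZero.pos N)
  have hL : (0:ℝ) < ∑ j, d j := Finset.sum_pos (fun j _ => hd j) Finset.univ_nonempty
  set L : ℝ := ∑ j, d j with hLdef
  set A : ℝ := ∑ j, α j with hAdef
  set E : Fin N → ℂ := fun j => Complex.exp (Complex.I * (α j : ℂ)) *
        Complex.exp (Complex.I * (k : ℂ) * (d j : ℂ)) with hE
  have hEne : ∀ j, E j ≠ 0 := fun j =>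
    mul_ne_zero (Complex.exp_ne_zero _) (Complex.exp_ne_zero _)
  have hEprod : (∏ j, E j) = Complex.exp (Complex.I * ((A + k * L : ℝ) : ℂ)) := by
    calc (∏ j, E j)
        = Complex.exp (∑ j, (Complex.I * (α j : ℂ) + Complex.I * (k:ℂ) * (d j : ℂ))) := by
          rw [Complex.exp_sum]
          exact Finset.prod_congr rfl (fun j _ => (Complex.exp_add _ _).symm)
      _ = Complex.exp (Complex.I * ((A + k * L : ℝ) : ℂ)) := by
          congr 1
          rw [Finset.sum_add_distrib, ← Finset.mul_sum, ← Finset.mul_sum]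
          push_cast [hAdef, hLdef]
          ring
  have key : Complex.exp (Complex.I * ((A + k * L : ℝ) : ℂ)) = 1 ↔
      ∃ n : ℤ, k = (2 * Real.pi * n - A) / L := by
    rw [Complex.exp_eq_one_iff]
    constructor
    · rintro ⟨n, hn⟩
      refine ⟨n, ?_⟩
      have h2 : ((A + k * L : ℝ) : ℂ) = ((n * (2 * Real.pi) : ℝ) : ℂ) := by
        apply mul_left_cancel₀ Complex.I_ne_zero
        rw [hn]; push_cast; ring
      have h3 : A + k * L = n * (2 * Real.pi) := by exact_mod_cast h2
      field_simp
      linarith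
    · rintro ⟨n, hn⟩
      refine ⟨n, ?_⟩
      have h3 : A + k * L = n * (2 * Real.pi) := by
        rw [hn]; field_simp; ring
      rw [h3]; push_cast; ring
  constructor
  · rintro ⟨c, hc0, hc⟩
    have hne : ∀ j, c j ≠ 0 := by
      by_contra h
      push_neg at h
      obtain ⟨j0, hj0⟩ := h
      have hstep : ∀ m : ℕ, c (j0 + (m : Fin N)) = 0 := by
        intro m
        induction m with
        | zero => simpa using hj0
        | succ m ih =>
          have hcast : (((m+1 : ℕ)) : Fin N) = (m : Fin N) + 1 := by push_cast; ring
          rw [hcast, ← add_assoc, hc (j0 + (m : Fin N)), ih, mul_zero]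
      apply hc0
      funext i
      have := hstep ((i - j0).val)
      rwa [Fin.cast_val_eq_self, add_sub_cancel] at this
    have hprod : (∏ j, c (j + 1)) = (∏ j, E j) * ∏ j, c j := by
      rw [← Finset.prod_mul_distrib]
      exact Finset.prod_congr rfl (fun j _ => hc j)
    have hshift : (∏ j, c (j + 1)) = ∏ j, c j :=
      Fintype.prod_equiv (Equiv.addRight 1) _ _ (fun x => rfl)
    have hcne : (∏ j, c j) ≠ 0 := Finset.prod_ne_zero_iff.mpr (fun j _ => hne j)
    have hE1 : (∏ j, E j) = 1 := by
      have h := hshift.symm.trans hprod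
      nth_rewrite 1 [← one_mul (∏ j, c j)] at h
      exact (mul_right_cancel₀ hcne h).symm
    exact key.mp (by rw [← hEprod, hE1])
  · rintro ⟨n, hn⟩
    have hexp1 : Complex.exp (Complex.I * ((A + k * L : ℝ) : ℂ)) = 1 :=
      key.mpr ⟨n, hn⟩
    -- construct the eigenvector
    set F : ℕ → ℂ := fun t => Complex.I * (α (t : Fin N) : ℂ) +
        Complex.I * (k : ℂ) * (d (t : Fin N) : ℂ) with hF
    refine ⟨fun j => Complex.exp (∑ t ∈ Finset.range j.val, F t), ?_, ?_⟩
    · intro h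
      exact Complex.exp_ne_zero _ (congrFun h 0)
    · intro j
      rw [← Complex.exp_add, ← Complex.exp_add]
      by_cases hj : j.val + 1 < N
      · have hval : (j + 1 : Fin N).val = j.val + 1 := by
          have h1 : 1 % N = 1 := Nat.mod_eq_of_lt (by omega)
          rw [Fin.add_def, Fin.val_one', h1]
          exact Nat.mod_eq_of_lt hj
        have hsum : (∑ t ∈ Finset.range (j + 1 : Fin N).val, F t)
            = Complex.I * (α j : ℂ) + Complex.I * (k:ℂ) * (d j : ℂ)
              + ∑ t ∈ Finset.range j.val, F t := by
          rw [hval, Finset.sum_range_succ, hF]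
          simp only [Fin.cast_val_eq_self]
          ring
        beta_reduce
        rw [hsum]
      · have hjN : j.val + 1 = N := by omega
        have hval : (j + 1 : Fin N).val = 0 := by
          have hdef : (j + 1 : Fin N).val = (j.val + (1 : Fin N).val) % N := by
            rw [Fin.add_def]
          rw [hdef, Fin.val_one']
          rcases Nat.lt_or_ge 1 N with h | h
          · rw [Nat.mod_eq_of_lt h, hjN, Nat.mod_self]
          · have hN1 : N = 1 := le_antisymm h NeZero.one_le
            subst hN1
            omega
        beta_reduce
        rw [hval]
        simp only [Finset.range_zero, Finset.sum_empty, Complex.exp_zero]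
        have hfull : Complex.I * (α j : ℂ) + Complex.I * (k:ℂ) * (d j : ℂ) +
            ∑ t ∈ Finset.range j.val, F t = ∑ t ∈ Finset.range N, F t := by
          rw [show Finset.range N = Finset.range (j.val + 1) by rw [hjN],
            Finset.sum_range_succ, hF]
          simp only [Fin.cast_val_eq_self]
          ring
        rw [hfull]
        have hsum : (∑ t ∈ Finset.range N, F t) = Complex.I * ((A + k * L : ℝ) : ℂ) := by
          rw [← Fin.sum_univ_eq_sum_range (fun t => F t) N]
          simp only [hF, Fin.cast_val_eq_self]
          rw [Finset.sum_add_distrib, ← Finset.mul_sum, ← Finset.mul_sum]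
          push_cast [hAdef, hLdef]
          ring
        rw [hsum, hexp1]
end

section
/- Let n ≥ 1, let U be an n×n complex unitary matrix, let ℓ : Fin n → ℝ satisfy ℓ(m) > 0 for all m, and let z ∈ ℂ. If det( U·D(z) − I ) = 0, where D(z) is the diagonal matrix with entries D(z)_{mm} = exp(i·z·ℓ(m)) and I is the identity matrix, then z is real (Im z = 0). -/
/-- The secular equation `det(U · diag(exp(izℓ_m)) - I) = 0` of a momentum operator on a
finite balanced oriented graph, with `U` unitary and positive edge lengths `ℓ_m`, can be
satisfied only for real values of the spectral parameter `z`. -/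
theorem stmt9 (n : ℕ) (hn : 1 ≤ n) (U : Matrix (Fin n) (Fin n) ℂ)
    (hU : U ∈ Matrix.unitaryGroup (Fin n) ℂ)
    (ℓ : Fin n → ℝ) (hℓ : ∀ m, 0 < ℓ m) (z : ℂ)
    (h : (U * Matrix.diagonal (fun m => Complex.exp (Complex.I * z * (ℓ m : ℂ))) - 1).det
        = 0) :
    z.im = 0 := by
  set D := Matrix.diagonal (fun m => Complex.exp (Complex.I * z * (ℓ m : ℂ))) with hD
  obtain ⟨v, hv, hmul⟩ := (Matrix.exists_mulVec_eq_zero_iff).2 h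
  have hUD : (U * D).mulVec v = v := by
    rw [Matrix.sub_mulVec, Matrix.one_mulVec, sub_eq_zero] at hmul
    exact hmul
  set w := D.mulVec v with hw
  have hUw : U.mulVec w = v := by rw [hw, Matrix.mulVec_mulVec, hUD]
  have hwj : ∀ j, w j = Complex.exp (Complex.I * z * (ℓ j : ℂ)) * v j := by
    intro j; simp [hw, hD, Matrix.mulVec_diagonal]
  clear_value w
  have hnorm : dotProduct (star w) w = dotProduct (star v) v := by
    conv_rhs => rw [← hUw]
    have hU1 : U.conjTranspose * U = 1 := by
      simpa [Matrix.star_eq_conjTranspose] using (Matrix.mem_unitaryGroup_iff').1 hU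
    rw [Matrix.star_mulVec, Matrix.dotProduct_mulVec, Matrix.vecMul_vecMul,
      hU1, Matrix.vecMul_one]
  have habs : ∀ j, Complex.normSq (w j) = Real.exp (-2 * z.im * ℓ j) * Complex.normSq (v j) := by
    intro j
    rw [hwj j, Complex.normSq_mul, Complex.normSq_eq_norm_sq, Complex.norm_exp]
    have : (Complex.I * z * (ℓ j : ℂ)).re = -z.im * ℓ j := by simp [Complex.mul_re]
    rw [this, sq, ← Real.exp_add]
    ring_nf
  have hC : (∑ j, (Complex.normSq (w j) : ℂ)) = ∑ j, (Complex.normSq (v j) : ℂ) := by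
    simpa [dotProduct, Complex.normSq_eq_conj_mul_self] using hnorm
  have hR : ∑ j, Complex.normSq (w j) = ∑ j, Complex.normSq (v j) := by exact_mod_cast hC
  have hreal : ∑ j, Real.exp (-2 * z.im * ℓ j) * Complex.normSq (v j)
      = ∑ j, Complex.normSq (v j) := by
    rw [← hR]; exact Finset.sum_congr rfl fun j _ => (habs j).symm
  by_contra ht
  obtain ⟨j0, hj0⟩ : ∃ j, v j ≠ 0 := Function.ne_iff.1 hv
  have hvj0 : 0 < Complex.normSq (v j0) := Complex.normSq_pos.2 hj0
  rcases lt_or_gt_of_ne ht with hlt | hgt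
  · have : ∑ j, Complex.normSq (v j) < ∑ j, Real.exp (-2 * z.im * ℓ j) * Complex.normSq (v j) := by
      apply Finset.sum_lt_sum
      · intro j _
        have h1 : (1:ℝ) ≤ Real.exp (-2 * z.im * ℓ j) :=
          Real.one_le_exp (by nlinarith [hℓ j])
        nlinarith [Complex.normSq_nonneg (v j)]
      · refine ⟨j0, Finset.mem_univ j0, ?_⟩
        have h1 : (1:ℝ) < Real.exp (-2 * z.im * ℓ j0) :=
          Real.one_lt_exp_iff.2 (by nlinarith [hℓ j0])
        nlinarith
    linarith
  · have : ∑ j, Real.exp (-2 * z.im * ℓ j) * Complex.normSq (v j) < ∑ j, Complex.normSq (v j) := by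
      apply Finset.sum_lt_sum
      · intro j _
        have h1 : Real.exp (-2 * z.im * ℓ j) ≤ 1 :=
          Real.exp_le_one_iff.2 (by nlinarith [hℓ j])
        nlinarith [Complex.normSq_nonneg (v j)]
      · refine ⟨j0, Finset.mem_univ j0, ?_⟩
        have h1 : Real.exp (-2 * z.im * ℓ j0) < 1 :=
          Real.exp_lt_one_iff.2 (by nlinarith [hℓ j0])
        nlinarith
    linarith
end

section
/- Let ℓ₁, ℓ₃ > 0 and k ∈ ℝ. There exist complex numbers c₀, c₁, c₂, c₃, c₄ with c₀ = 0, c₄ = 0, (c₁, c₂, c₃) ≠ (0,0,0), satisfying the vertex conditions c₁ = (1/√2)·( exp(i·k·ℓ₃)·c₃ + c₀ ), c₂ = (1/√2)·( exp(i·k·ℓ₃)·c₃ − c₀ ), c₃ = (1/√2)·exp(i·k·ℓ₁)·( c₁ + c₂ ), c₄ = (1/√2)·exp(i·k·ℓ₁)·( c₁ − c₂ ), if and only if there exists n ∈ ℤ with k = 2πn/(ℓ₁ + ℓ₃). -/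
/-- The vertex coupling conditions for the two-loop graph with an incoming and an
outgoing lead, equal lengths `ℓ₁ = ℓ₂`, and coupling matrix `(1/√2)·[[1,1],[1,-1]]`
at both vertices, for an eigenfunction `c_j · exp(ikx)` on the `j`-th edge. -/
def twoLoopConds (ℓ₁ ℓ₃ k : ℝ) (c₀ c₁ c₂ c₃ c₄ : ℂ) : Prop :=
  c₁ = (1 / (Real.sqrt 2 : ℂ)) * (Complex.exp (Complex.I * (k : ℂ) * (ℓ₃ : ℂ)) * c₃ + c₀) ∧
  c₂ = (1 / (Real.sqrt 2 : ℂ)) * (Complex.exp (Complex.I * (k : ℂ) * (ℓ₃ : ℂ)) * c₃ - c₀) ∧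
  c₃ = (1 / (Real.sqrt 2 : ℂ)) * Complex.exp (Complex.I * (k : ℂ) * (ℓ₁ : ℂ)) * (c₁ + c₂) ∧
  c₄ = (1 / (Real.sqrt 2 : ℂ)) * Complex.exp (Complex.I * (k : ℂ) * (ℓ₁ : ℂ)) * (c₁ - c₂)

/-- Embedded eigenvalues of the momentum operator on the two-loop graph with leads:
a nonzero compactly supported eigenfunction (i.e. a solution of the vertex conditions
with `c₀ = c₄ = 0` and `(c₁,c₂,c₃) ≠ 0`) exists iff `k = 2πn/(ℓ₁+ℓ₃)` for some integer
`n`; in particular the unique continuation principle fails. -/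
theorem stmt12 (ℓ₁ ℓ₃ : ℝ) (h1 : 0 < ℓ₁) (h3 : 0 < ℓ₃) (k : ℝ) :
    (∃ c₀ c₁ c₂ c₃ c₄ : ℂ, c₀ = 0 ∧ c₄ = 0 ∧ ¬(c₁ = 0 ∧ c₂ = 0 ∧ c₃ = 0) ∧
      twoLoopConds ℓ₁ ℓ₃ k c₀ c₁ c₂ c₃ c₄) ↔
    ∃ n : ℤ, k = 2 * Real.pi * n / (ℓ₁ + ℓ₃) := by
  have hL : ℓ₁ + ℓ₃ ≠ 0 := by positivity
  have hsR : Real.sqrt 2 ≠ 0 := by positivity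
  have hs : (Real.sqrt 2 : ℂ) ≠ 0 := by exact_mod_cast hsR
  have hss : (Real.sqrt 2 : ℂ) * (Real.sqrt 2 : ℂ) = 2 := by
    norm_cast
    exact Real.mul_self_sqrt (by norm_num)
  have h2inv : (1 / (Real.sqrt 2 : ℂ)) * (1 / (Real.sqrt 2 : ℂ)) = 1 / 2 := by
    rw [div_mul_div_comm, hss]
    norm_num
  set e1 := Complex.exp (Complex.I * (k : ℂ) * (ℓ₁ : ℂ)) with he1
  set e3 := Complex.exp (Complex.I * (k : ℂ) * (ℓ₃ : ℂ)) with he3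
  have hadd : e1 * e3 = Complex.exp (Complex.I * (k : ℂ) * (ℓ₁ : ℂ) + Complex.I * (k : ℂ) * (ℓ₃ : ℂ)) := by
    rw [Complex.exp_add]
  constructor
  · rintro ⟨c₀, c₁, c₂, c₃, c₄, rfl, rfl, hne, ha, hb, hc, hd⟩
    have hc3 : c₃ ≠ 0 := by
      intro h
      exact hne ⟨by simp [ha, h], by simp [hb, h], h⟩
    rw [← he1] at hc
    rw [← he3] at ha hb
    have key : e1 * e3 = 1 := by
      have h2 : (e1 * e3 - 1) * c₃ = 0 := by
        linear_combination -hc - e1 * (1 / (Real.sqrt 2 : ℂ)) * ha -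
          e1 * (1 / (Real.sqrt 2 : ℂ)) * hb - 2 * e1 * e3 * c₃ * h2inv
      rcases mul_eq_zero.mp h2 with h' | h'
      · linear_combination h'
      · exact absurd h' hc3
    rw [hadd, Complex.exp_eq_one_iff] at key
    obtain ⟨n, hn⟩ := key
    refine ⟨n, ?_⟩
    have hcast : ((k * (ℓ₁ + ℓ₃) : ℝ) : ℂ) = ((2 * Real.pi * n : ℝ) : ℂ) := by
      apply mul_right_cancel₀ Complex.I_ne_zero
      push_cast
      linear_combination hn
    have hk : k * (ℓ₁ + ℓ₃) = 2 * Real.pi * n := Complex.ofReal_inj.mp hcast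
    field_simp
    linarith [hk]
  · rintro ⟨n, rfl⟩
    have hk : (2 * Real.pi * n / (ℓ₁ + ℓ₃)) * (ℓ₁ + ℓ₃) = 2 * Real.pi * n := by
      field_simp
    have key : e1 * e3 = 1 := by
      rw [hadd]
      have : Complex.I * ((2 * Real.pi * n / (ℓ₁ + ℓ₃) : ℝ) : ℂ) * (ℓ₁ : ℂ) +
          Complex.I * ((2 * Real.pi * n / (ℓ₁ + ℓ₃) : ℝ) : ℂ) * (ℓ₃ : ℂ) =
          (n : ℂ) * (2 * Real.pi * Complex.I) := by
        have := congrArg (fun x : ℝ => (x : ℂ)) hk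
        push_cast at this ⊢
        linear_combination Complex.I * this
      rw [this]
      exact Complex.exp_int_mul_two_pi_mul_I n
    refine ⟨0, 1 / (Real.sqrt 2 : ℂ) * e3, 1 / (Real.sqrt 2 : ℂ) * e3, 1, 0,
      rfl, rfl, fun h => one_ne_zero h.2.2, ?_, ?_, ?_, ?_⟩
    · simp only [← he3]; ring
    · simp only [← he3]; ring
    · simp only [← he1, ← he3]
      linear_combination (-2 * (1 / (Real.sqrt 2 : ℂ)) * (1 / (Real.sqrt 2 : ℂ))) * key -
        2 * h2inv
    · simp only [← he1, ← he3]; ring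
end

section
/- Let ℓ₁, ℓ₃ > 0 and k ∈ ℝ, and suppose k ≠ 2πn/(ℓ₁ + ℓ₃) for every n ∈ ℤ. Then every tuple of complex numbers (c₀, c₁, c₂, c₃, c₄) satisfying the vertex conditions c₁ = (1/√2)·( exp(i·k·ℓ₃)·c₃ + c₀ ), c₂ = (1/√2)·( exp(i·k·ℓ₃)·c₃ − c₀ ), c₃ = (1/√2)·exp(i·k·ℓ₁)·( c₁ + c₂ ), c₄ = (1/√2)·exp(i·k·ℓ₁)·( c₁ − c₂ ) must have c₃ = 0, c₁ = c₀/√2, c₂ = −c₀/√2 and c₄ = exp(i·k·ℓ₁)·c₀; in particular, for every k ∈ ℝ and every c₀ ∈ ℂ such a solution with c₃ = 0 exists. -/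
lemma sqrt2_sq : (Real.sqrt 2 : ℂ) * (Real.sqrt 2 : ℂ) = 2 := by
  rw [← Complex.ofReal_mul, Real.mul_self_sqrt (by norm_num)]
  norm_num

/-- Away from the embedded eigenvalues `2πn/(ℓ₁+ℓ₃)`, every generalized eigenfunction of
the momentum operator on the two-loop graph with leads vanishes on the returning edge:
`c₃ = 0`, `c₁ = c₀/√2`, `c₂ = -c₀/√2`, `c₄ = e^{ikℓ₁} c₀`; and conversely, for every
`k ∈ ℝ` and every `c₀` such a solution with `c₃ = 0` exists. -/
theorem stmt13 (ℓ₁ ℓ₃ : ℝ) (h1 : 0 < ℓ₁) (h3 : 0 < ℓ₃) (k : ℝ)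
    (hk : ∀ n : ℤ, k ≠ 2 * Real.pi * n / (ℓ₁ + ℓ₃)) :
    (∀ c₀ c₁ c₂ c₃ c₄ : ℂ, twoLoopConds ℓ₁ ℓ₃ k c₀ c₁ c₂ c₃ c₄ →
      c₃ = 0 ∧ c₁ = c₀ / (Real.sqrt 2 : ℂ) ∧ c₂ = -c₀ / (Real.sqrt 2 : ℂ) ∧
      c₄ = Complex.exp (Complex.I * (k : ℂ) * (ℓ₁ : ℂ)) * c₀) ∧
    (∀ k' : ℝ, ∀ c₀ : ℂ, ∃ c₁ c₂ c₃ c₄ : ℂ, c₃ = 0 ∧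
      twoLoopConds ℓ₁ ℓ₃ k' c₀ c₁ c₂ c₃ c₄) := by
  have hs2 : (Real.sqrt 2 : ℂ) ≠ 0 := by
    exact_mod_cast Complex.ofReal_ne_zero.mpr (by positivity : Real.sqrt 2 ≠ 0)
  have hs := sqrt2_sq
  constructor
  · rintro c₀ c₁ c₂ c₃ c₄ ⟨e1, e2, e3, e4⟩
    rw [div_mul_eq_mul_div, eq_div_iff hs2] at e1 e2
    rw [one_div, mul_assoc, inv_mul_eq_div, eq_comm, div_eq_iff hs2, eq_comm] at e3 e4
    have hE : Complex.exp (Complex.I * (k : ℂ) * ((ℓ₁ : ℂ) + (ℓ₃ : ℂ))) =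
        Complex.exp (Complex.I * (k : ℂ) * (ℓ₁ : ℂ)) *
        Complex.exp (Complex.I * (k : ℂ) * (ℓ₃ : ℂ)) := by
      rw [← Complex.exp_add]; ring_nf
    have hexp : Complex.exp (Complex.I * (k : ℂ) * ((ℓ₁ : ℂ) + (ℓ₃ : ℂ))) ≠ 1 := by
      intro h
      rw [Complex.exp_eq_one_iff] at h
      obtain ⟨n, hn⟩ := h
      have him := congrArg Complex.im hn
      simp [Complex.mul_im, Complex.add_im, Complex.mul_re] at him
      have hsum : ℓ₁ + ℓ₃ ≠ 0 := by positivity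
      refine hk n ?_
      field_simp
      nlinarith [him]
    have hzero : (Complex.exp (Complex.I * (k : ℂ) * ((ℓ₁ : ℂ) + (ℓ₃ : ℂ))) - 1) * c₃ = 0 := by
      linear_combination c₃ * hE - ((Real.sqrt 2 : ℂ) / 2) * e3 -
        (Complex.exp (Complex.I * (k : ℂ) * (ℓ₁ : ℂ)) / 2) * e1 -
        (Complex.exp (Complex.I * (k : ℂ) * (ℓ₁ : ℂ)) / 2) * e2 + (c₃ / 2) * hs
    have hc3 : c₃ = 0 := by
      rcases mul_eq_zero.mp hzero with h | h
      · exact absurd (sub_eq_zero.mp h) hexp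
      · exact h
    subst hc3
    refine ⟨rfl, ?_, ?_, ?_⟩
    · rw [eq_div_iff hs2]; linear_combination e1
    · rw [eq_div_iff hs2]; linear_combination e2
    · linear_combination ((Real.sqrt 2 : ℂ) / 2) * e4 +
        (Complex.exp (Complex.I * (k : ℂ) * (ℓ₁ : ℂ)) / 2) * e1 -
        (Complex.exp (Complex.I * (k : ℂ) * (ℓ₁ : ℂ)) / 2) * e2 - (c₄ / 2) * hs
  · intro k' c₀
    refine ⟨c₀ / (Real.sqrt 2 : ℂ), -c₀ / (Real.sqrt 2 : ℂ), 0,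
      Complex.exp (Complex.I * (k' : ℂ) * (ℓ₁ : ℂ)) * c₀, rfl, ?_, ?_, ?_, ?_⟩ <;>
    field_simp
    · ring
    · ring
    · ring
    · linear_combination c₀ * hs
end
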